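/- For all integers p, q ≥ 0, in Λ: Θ^p = 2^p p! Σ_{I ⊆ [n], |I|=2p} e_I · Pf(b_I) and Θ'^q = 2^q q! Σ_{J ⊆ [n], |J|=2q} e_{−J} · Pf(c_J). -/

import Mathlib

open Matrix
open scoped TensorProduct

set_option synthInstance.maxHeartbeats 1000000
set_option maxHeartbeats 1000000

attribute [local instance 100] LieRing.ofAssociativeRing

noncomputable section

/-- The `N×N` matrix `J_N` with 1's on the anti-diagonal and 0's elsewhere. -/
def antiDiagJ (N : ℕ) : Matrix (Fin N) (Fin N) ℂ :=
  Matrix.of fun i j => if j = Fin.rev i then 1 else 0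

/-- The orthogonal Lie algebra `𝔬_{2n} = {X : Xᵀ J_{2n} + J_{2n} X = 0}`. -/
abbrev oLie (n : ℕ) : LieSubalgebra ℂ (Matrix (Fin (2 * n)) (Fin (2 * n)) ℂ) :=
  skewAdjointMatricesLieSubalgebra (antiDiagJ (2 * n))

/-- The universal enveloping algebra `U(𝔬_{2n})`. -/
abbrev Uo (n : ℕ) := UniversalEnvelopingAlgebra ℂ (oLie n)

/-- The canonical map `ι : 𝔬_{2n} → U(𝔬_{2n})`. -/
def uIota (n : ℕ) : oLie n →ₗ⁅ℂ⁆ Uo n := UniversalEnvelopingAlgebra.ι ℂ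

/-- Noncommutative Pfaffian of a matrix `M` with entries in a `ℂ`-algebra satisfying
`M_{j,i} = −M_{i,j}`:
`Pf(M) := (1/(2^m m!)) Σ_{σ∈S_{2m}} sgn(σ) M_{σ(1),σ(2)} ⋯ M_{σ(2m−1),σ(2m)}`
(junk value `0` if the size is odd). -/
def ncPf {A : Type*} [Ring A] [Algebra ℂ A] {m : ℕ} (M : Matrix (Fin m) (Fin m) A) : A :=
  if hm : m % 2 = 0 then
    ((2 : ℂ) ^ (m / 2) * (m / 2).factorial)⁻¹ •
      ∑ σ : Equiv.Perm (Fin m),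
        (Equiv.Perm.sign σ : ℤ) •
          (List.ofFn fun i : Fin (m / 2) =>
            M (σ ⟨2 * i.1, by have := i.2; omega⟩)
              (σ ⟨2 * i.1 + 1, by have := i.2; omega⟩)).prod
  else 0

/-- `Λ := ⋀(ℂ^{2n}) ⊗ U(𝔬_{2n})`. -/
abbrev Lam (n : ℕ) := ExteriorAlgebra ℂ (Fin (2 * n) → ℂ) ⊗[ℂ] Uo n

/-- `e_i ∈ Λ`, the image of the `i`-th standard basis vector. -/
def eL (n : ℕ) (i : Fin (2 * n)) : Lam n :=
  ExteriorAlgebra.ι ℂ (Pi.single i 1) ⊗ₜ[ℂ] 1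

/-- The embedding `U(𝔬_{2n}) → Λ`, `u ↦ 1 ⊗ u`. -/
def embU (n : ℕ) (u : Uo n) : Lam n := 1 ⊗ₜ[ℂ] u

/-- `Θ := Σ_{i,j∈[n]} e_i e_j b_{i,j}` with `b_{i,j} = ι(X_{i,−j})`. -/
def ThetaL (n : ℕ) (𝒳 : Fin (2 * n) → Fin (2 * n) → oLie n) : Lam n :=
  ∑ i : Fin n, ∑ j : Fin n,
    eL n (Fin.castLE (by omega) i) * eL n (Fin.castLE (by omega) j) *
      embU n (uIota n (𝒳 (Fin.castLE (by omega) i) (Fin.rev (Fin.castLE (by omega) j))))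

/-- `Θ' := Σ_{i,j∈[n]} e_{−j} e_{−i} c_{i,j}` with `c_{i,j} = ι(X_{−j,i})`. -/
def ThetaL' (n : ℕ) (𝒳 : Fin (2 * n) → Fin (2 * n) → oLie n) : Lam n :=
  ∑ i : Fin n, ∑ j : Fin n,
    eL n (Fin.rev (Fin.castLE (by omega) j)) * eL n (Fin.rev (Fin.castLE (by omega) i)) *
      embU n (uIota n (𝒳 (Fin.rev (Fin.castLE (by omega) j)) (Fin.castLE (by omega) i)))

/-- Noncommutative Pfaffian of the submatrix of `M` with rows and columns in `I`. -/
def ncPfSub {A : Type*} [Ring A] [Algebra ℂ A] {N : ℕ} (M : Matrix (Fin N) (Fin N) A)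
    (I : Finset (Fin N)) : A :=
  ncPf (Matrix.of fun α β : Fin I.card => M (I.orderEmbOfFin rfl α) (I.orderEmbOfFin rfl β))

/-- `e_I := e_{i_1} ⋯ e_{i_r} ∈ Λ` for `I = {i_1 < ⋯ < i_r} ⊆ [n]`. -/
def eLProd (n : ℕ) (I : Finset (Fin n)) : Lam n :=
  (List.ofFn fun α : Fin I.card =>
    eL n (Fin.castLE (by omega) (I.orderEmbOfFin rfl α))).prod

/-- `e_{−J} := e_{−j_s} ⋯ e_{−j_1} ∈ Λ` for `J = {j_1 < ⋯ < j_s} ⊆ [n]`. -/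
def eLProdNeg (n : ℕ) (J : Finset (Fin n)) : Lam n :=
  ((List.ofFn fun β : Fin J.card =>
    eL n (Fin.rev (Fin.castLE (by omega) (J.orderEmbOfFin rfl β)))).reverse).prod


section Generic
variable {M : Type*} [Monoid M]

theorem myOfFn_cast {α : Type*} {m m' : ℕ} (h : m = m') (f : Fin m' → α) :
    List.ofFn f = List.ofFn (fun i : Fin m => f (Fin.cast h i)) := by
  subst h; rfl

theorem myProd_pair : ∀ (p : ℕ) (x : Fin (2*p) → M),
    (List.ofFn fun k : Fin p => x ⟨2*k.1, by have := k.2; omega⟩ *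
      x ⟨2*k.1+1, by have := k.2; omega⟩).prod = (List.ofFn x).prod := by
  intro p
  induction p with
  | zero => intro x; simp
  | succ p ih =>
    intro x
    rw [List.ofFn_succ, List.prod_cons]
    have h2 : List.ofFn x = x ⟨0, by omega⟩ :: x ⟨1, by omega⟩ ::
        List.ofFn (fun i : Fin (2*p) => x ⟨i.1+2, by have := i.2; omega⟩) := by
      rw [List.ofFn_succ (f := x), List.ofFn_succ]
      rfl
    rw [h2, List.prod_cons, List.prod_cons, ← mul_assoc]
    rw [← ih (fun i : Fin (2*p) => x ⟨i.1+2, by have := i.2; omega⟩)]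
    rfl

/-- power of a finite sum in a possibly-noncommutative setting -/
theorem myPowExpand {A : Type*} [Semiring A] {ι : Type*} [Fintype ι] (T : ι → A) :
    ∀ p : ℕ, (∑ x : ι, T x) ^ p = ∑ f : Fin p → ι, (List.ofFn fun k => T (f k)).prod := by
  intro p
  induction p with
  | zero =>
    symm
    rw [Fintype.sum_unique]
    simp
  | succ p ih =>
    rw [pow_succ', ih, Finset.sum_mul_sum]
    rw [← Equiv.sum_comp (Fin.consEquiv (fun _ : Fin (p+1) => ι))
      (fun g => (List.ofFn fun k => T (g k)).prod), Fintype.sum_prod_type]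
    apply Finset.sum_congr rfl; intro x _
    apply Finset.sum_congr rfl; intro f _
    rw [List.ofFn_succ, List.prod_cons]
    simp [Fin.consEquiv]

/-- pull a chain of negations out of a list product -/
theorem myNegProd {A : Type*} [Ring A] : ∀ (q : ℕ) (x : Fin q → A),
    (List.ofFn fun k => -(x k)).prod = ((-1 : ℤ)^q) • (List.ofFn x).prod := by
  intro q
  induction q with
  | zero => intro x; simp
  | succ q ih =>
    intro x
    rw [List.ofFn_succ, List.prod_cons, List.ofFn_succ (f := x), List.prod_cons,
      ih (fun i => x i.succ), mul_smul_comm, neg_mul, pow_succ, mul_comm]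
    simp [mul_smul]

/-- move an element across a list of anticommuting elements -/
theorem myMoveLeft {A : Type*} [Ring A] (x : A) :
    ∀ (l : List A), (∀ y ∈ l, y * x = -(x * y)) →
      l.prod * x = ((-1 : ℤ)^l.length) • (x * l.prod) := by
  intro l
  induction l with
  | nil => intro _; simp
  | cons y t ih =>
    intro h
    rw [List.prod_cons, mul_assoc, ih (fun z hz => h z (by simp [hz])), mul_smul_comm,
      ← mul_assoc, h y (by simp), List.length_cons, pow_succ, mul_comm ((-1:ℤ)^t.length)]
    simp [mul_smul, mul_assoc]

/-- reversing a list of pairwise anticommuting elements -/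
theorem myRevProd {A : Type*} [Ring A] : ∀ (m : ℕ) (x : Fin m → A),
    (∀ i j, x i * x j = -(x j * x i)) →
    (List.ofFn x).reverse.prod = ((-1 : ℤ)^(m.choose 2)) • (List.ofFn x).prod := by
  intro m
  induction m with
  | zero => intro x _; simp
  | succ m ih =>
    intro x hx
    have h' : ∀ y ∈ List.ofFn (fun i : Fin m => x i.succ), y * x 0 = -(x 0 * y) := by
      intro y hy
      rw [List.mem_ofFn] at hy
      obtain ⟨i, rfl⟩ := hy
      exact hx _ _
    rw [List.ofFn_succ, List.reverse_cons, List.prod_append, List.prod_cons, List.prod_nil,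
      mul_one, ih (fun i => x i.succ) (fun i j => hx _ _), smul_mul_assoc,
      myMoveLeft (x 0) _ h', smul_smul, List.length_ofFn, List.prod_cons, ← pow_add]
    congr 2
    rw [Nat.choose_succ_succ, Nat.choose_one_right, Nat.add_comm]

end Generic



theorem myNcPf_cast {A : Type*} [Ring A] [Algebra ℂ A] {m p : ℕ} (h : m = 2*p)
    (M : Matrix (Fin m) (Fin m) A) :
    ncPf M = ((2 : ℂ) ^ p * p.factorial)⁻¹ •
      ∑ σ : Equiv.Perm (Fin m),
        (Equiv.Perm.sign σ : ℤ) •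
          (List.ofFn fun k : Fin p =>
            M (σ (Fin.cast h.symm ⟨2 * k.1, by have := k.2; omega⟩))
              (σ (Fin.cast h.symm ⟨2 * k.1 + 1, by have := k.2; omega⟩))).prod := by
  subst h
  rw [ncPf, dif_pos (Nat.mul_mod_right 2 p)]
  have h2 : 2 * p / 2 = p := Nat.mul_div_cancel_left p (by norm_num)
  congr 1
  · rw [h2]
  · apply Finset.sum_congr rfl
    intro σ _
    congr 1
    rw [myOfFn_cast h2.symm (f := fun i : Fin (2*p/2) =>
      M (σ ⟨2 * i.1, by have := i.2; omega⟩) (σ ⟨2 * i.1 + 1, by have := i.2; omega⟩))]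
    rfl

variable {A B : Type*} [Ring A] [Ring B] [Algebra ℂ A] [Algebra ℂ B]

theorem myTmulProd : ∀ (m : ℕ) (E : Fin m → A) (u : Fin m → B),
    (List.ofFn fun k => (E k ⊗ₜ[ℂ] u k : A ⊗[ℂ] B)).prod
      = (List.ofFn E).prod ⊗ₜ[ℂ] (List.ofFn u).prod := by
  intro m
  induction m with
  | zero => intro E u; simp [Algebra.TensorProduct.one_def]
  | succ m ih =>
    intro E u
    rw [List.ofFn_succ, List.prod_cons, ih (fun i => E i.succ) (fun i => u i.succ),
      Algebra.TensorProduct.tmul_mul_tmul, List.ofFn_succ (f := E), List.ofFn_succ (f := u),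
      List.prod_cons, List.prod_cons]

theorem myZsmulTmulLeft (z : ℤ) (x : A) (u : B) :
    (z • x) ⊗ₜ[ℂ] u = z • (x ⊗ₜ[ℂ] u) :=
  map_zsmul (((TensorProduct.mk ℂ A B).flip u).toAddMonoidHom) z x

theorem myZsmulTmulRight (z : ℤ) (x : A) (u : B) :
    x ⊗ₜ[ℂ] (z • u) = z • (x ⊗ₜ[ℂ] u) :=
  map_zsmul ((TensorProduct.mk ℂ A B x).toAddMonoidHom) z u

def unpairFun {p : ℕ} {ι : Type*} (f : Fin p → ι × ι) (k : Fin (2*p)) : ι :=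
  if h : k.1 % 2 = 0 then (f ⟨k.1/2, by have := k.2; omega⟩).1
    else (f ⟨k.1/2, by have := k.2; omega⟩).2

theorem unpairFun_even {p : ℕ} {ι : Type*} (f : Fin p → ι × ι) (k : Fin p) :
    unpairFun f ⟨2*k.1, by have := k.2; omega⟩ = (f k).1 := by
  simp [unpairFun, Nat.mul_mod_right, Nat.mul_div_cancel_left _ (by norm_num : 0 < 2)]

theorem unpairFun_odd {p : ℕ} {ι : Type*} (f : Fin p → ι × ι) (k : Fin p) :
    unpairFun f ⟨2*k.1+1, by have := k.2; omega⟩ = (f k).2 := by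
  have : (2*k.1+1) % 2 = 1 := by omega
  have hd : (2*k.1+1) / 2 = k.1 := by omega
  simp [unpairFun, this, hd]

def pairEquiv (p : ℕ) (ι : Type*) : (Fin p → ι × ι) ≃ (Fin (2*p) → ι) where
  toFun := unpairFun
  invFun a j := (a ⟨2*j.1, by have := j.2; omega⟩, a ⟨2*j.1+1, by have := j.2; omega⟩)
  left_inv f := by
    funext j
    ext
    · exact unpairFun_even f j
    · exact unpairFun_odd f j
  right_inv a := by
    funext k
    rcases Nat.even_or_odd k.1 with he | ho
    · have h0 : k.1 % 2 = 0 := Nat.even_iff.mp he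
      have hk : (⟨2*(k.1/2), by have := k.2; omega⟩ : Fin (2*p)) = k := by
        ext; simp; omega
      calc unpairFun (fun j : Fin p => (a ⟨2*j.1, by have := j.2; omega⟩,
              a ⟨2*j.1+1, by have := j.2; omega⟩)) k
          = unpairFun (fun j : Fin p => (a ⟨2*j.1, by have := j.2; omega⟩,
              a ⟨2*j.1+1, by have := j.2; omega⟩)) ⟨2*(k.1/2), by have := k.2; omega⟩ := by
            rw [hk]
        _ = a ⟨2*(k.1/2), by have := k.2; omega⟩ := unpairFun_even _ ⟨k.1/2, by have := k.2; omega⟩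
        _ = a k := by rw [hk]
    · have h1 : k.1 % 2 = 1 := Nat.odd_iff.mp ho
      have hk : (⟨2*(k.1/2)+1, by have := k.2; omega⟩ : Fin (2*p)) = k := by
        ext; simp; omega
      calc unpairFun (fun j : Fin p => (a ⟨2*j.1, by have := j.2; omega⟩,
              a ⟨2*j.1+1, by have := j.2; omega⟩)) k
          = unpairFun (fun j : Fin p => (a ⟨2*j.1, by have := j.2; omega⟩,
              a ⟨2*j.1+1, by have := j.2; omega⟩)) ⟨2*(k.1/2)+1, by have := k.2; omega⟩ := by
            rw [hk]
        _ = a ⟨2*(k.1/2)+1, by have := k.2; omega⟩ := unpairFun_odd _ ⟨k.1/2, by have := k.2; omega⟩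
        _ = a k := by rw [hk]

theorem eL_prod_eq (n m : ℕ) (c : Fin m → Fin (2*n)) :
    (List.ofFn fun k => eL n (c k)).prod
      = (ExteriorAlgebra.ιMulti ℂ m (fun k => Pi.single (c k) (1:ℂ))) ⊗ₜ[ℂ] (1 : Uo n) := by
  have : (List.ofFn fun k => eL n (c k)).prod
      = (List.ofFn fun k => ExteriorAlgebra.ι ℂ (Pi.single (c k) (1:ℂ))).prod ⊗ₜ[ℂ]
        (List.ofFn fun _ : Fin m => (1 : Uo n)).prod := myTmulProd m _ _
  rw [this, ExteriorAlgebra.ιMulti_apply]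
  congr 1
  simp

theorem eL_anticomm (n : ℕ) (a b : Fin (2*n)) :
    eL n a * eL n b = -(eL n b * eL n a) := by
  have key : ∀ v w : Fin (2*n) → ℂ, ExteriorAlgebra.ι ℂ v * ExteriorAlgebra.ι ℂ w
      = -(ExteriorAlgebra.ι ℂ w * ExteriorAlgebra.ι ℂ v) := by
    intro v w
    have h := ExteriorAlgebra.ι_sq_zero (R := ℂ) (v + w)
    rw [map_add, add_mul, mul_add, mul_add, ExteriorAlgebra.ι_sq_zero,
      ExteriorAlgebra.ι_sq_zero] at h
    linear_combination (norm := noncomm_ring) h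
  rw [eL, eL, Algebra.TensorProduct.tmul_mul_tmul, Algebra.TensorProduct.tmul_mul_tmul, key]
  simp [TensorProduct.neg_tmul]

/-- the permutation sorting an injective tuple -/
noncomputable def permOf {n p : ℕ} (a : Fin (2*p) → Fin n) (h : Function.Injective a) :
    Equiv.Perm (Fin (2*p)) :=
  Equiv.ofBijective (fun k => ((Finset.image a Finset.univ).orderIsoOfFin
      (by rw [Finset.card_image_of_injective _ h, Finset.card_univ, Fintype.card_fin])).symm
      ⟨a k, by simp [Finset.mem_image]⟩)
    (Finite.injective_iff_bijective.mp (by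
      intro k l hkl
      apply h
      have := congrArg (fun x => (((Finset.image a Finset.univ).orderIsoOfFin
        (by rw [Finset.card_image_of_injective _ h, Finset.card_univ, Fintype.card_fin])) x
          : Fin n)) hkl
      simpa using this))

theorem permOf_spec {n p : ℕ} (a : Fin (2*p) → Fin n) (h : Function.Injective a)
    (h' : (Finset.image a Finset.univ).card = 2*p) (k : Fin (2*p)) :
    (Finset.image a Finset.univ).orderEmbOfFin h' (permOf a h k) = a k := by
  rw [← Finset.coe_orderIsoOfFin_apply]
  show ((((Finset.image a Finset.univ).orderIsoOfFin h')
    (((Finset.image a Finset.univ).orderIsoOfFin h').symm ⟨a k, _⟩)) : Fin n) = a k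
  rw [OrderIso.apply_symm_apply]

theorem ordEmb_congr {α : Type*} [LinearOrder α] {s t : Finset α} (hst : s = t) {m : ℕ}
    (hs : s.card = m) (ht : t.card = m) (k : Fin m) :
    s.orderEmbOfFin hs k = t.orderEmbOfFin ht k := by
  subst hst; rfl
section MainLemma

noncomputable def Hfun {n : ℕ} (φ : Fin n → Fin (2*n)) (g : Fin n → Fin n → Uo n) (p : ℕ)
    (a : Fin (2*p) → Fin n) : Lam n :=
  (ExteriorAlgebra.ιMulti ℂ (2*p) (fun k => Pi.single (φ (a k)) (1:ℂ))) ⊗ₜ[ℂ]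
  (List.ofFn fun k : Fin p =>
    g (a ⟨2*k.1, by have := k.2; omega⟩) (a ⟨2*k.1+1, by have := k.2; omega⟩)).prod

theorem Hfun_pair {n : ℕ} (φ : Fin n → Fin (2*n)) (g : Fin n → Fin n → Uo n) (p : ℕ)
    (f : Fin p → Fin n × Fin n) :
    Hfun φ g p (pairEquiv p (Fin n) f)
      = (ExteriorAlgebra.ιMulti ℂ (2*p)
          (fun k => Pi.single (φ (pairEquiv p (Fin n) f k)) (1:ℂ))) ⊗ₜ[ℂ]
        (List.ofFn fun k : Fin p => g (f k).1 (f k).2).prod := by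
  rw [Hfun]
  congr 1
  refine congrArg List.prod (congrArg List.ofFn (funext fun k => ?_))
  have h1 : pairEquiv p (Fin n) f ⟨2*k.1, by have := k.2; omega⟩ = (f k).1 := unpairFun_even f k
  have h2 : pairEquiv p (Fin n) f ⟨2*k.1+1, by have := k.2; omega⟩ = (f k).2 := unpairFun_odd f k
  rw [h1, h2]

theorem term_eq {n : ℕ} (φ : Fin n → Fin (2*n)) (g : Fin n → Fin n → Uo n) (p : ℕ)
    (f : Fin p → Fin n × Fin n) :
    (List.ofFn fun k : Fin p =>
        eL n (φ (f k).1) * eL n (φ (f k).2) * embU n (g (f k).1 (f k).2)).prod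
      = Hfun φ g p (pairEquiv p (Fin n) f) := by
  rw [Hfun_pair]
  have hfact : ∀ k : Fin p, eL n (φ (f k).1) * eL n (φ (f k).2) * embU n (g (f k).1 (f k).2)
      = (ExteriorAlgebra.ι ℂ (Pi.single (φ (f k).1) (1:ℂ)) *
         ExteriorAlgebra.ι ℂ (Pi.single (φ (f k).2) (1:ℂ))) ⊗ₜ[ℂ] (g (f k).1 (f k).2) := by
    intro k
    rw [eL, eL, embU, Algebra.TensorProduct.tmul_mul_tmul, Algebra.TensorProduct.tmul_mul_tmul,
      mul_one, one_mul, one_mul]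
  rw [congrArg List.prod (congrArg List.ofFn (funext hfact))]
  rw [myTmulProd p _ _]
  congr 1
  rw [ExteriorAlgebra.ιMulti_apply]
  refine Eq.trans ?_ (myProd_pair p _)
  refine congrArg List.prod (congrArg List.ofFn (funext fun k => ?_))
  have h1 : pairEquiv p (Fin n) f ⟨2*k.1, by have := k.2; omega⟩ = (f k).1 := unpairFun_even f k
  have h2 : pairEquiv p (Fin n) f ⟨2*k.1+1, by have := k.2; omega⟩ = (f k).2 := unpairFun_odd f k
  rw [h1, h2]

end MainLemma
theorem step1 {n : ℕ} (φ : Fin n → Fin (2*n)) (g : Fin n → Fin n → Uo n) (p : ℕ) :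
    (∑ i : Fin n, ∑ j : Fin n, eL n (φ i) * eL n (φ j) * embU n (g i j)) ^ p
      = ∑ a : Fin (2*p) → Fin n, Hfun φ g p a := by
  rw [← Fintype.sum_prod_type']
  rw [myPowExpand]
  rw [← Equiv.sum_comp (pairEquiv p (Fin n)) (Hfun φ g p)]
  exact Finset.sum_congr rfl (fun f _ => term_eq φ g p f)

theorem Hfun_vanish {n : ℕ} (φ : Fin n → Fin (2*n)) (g : Fin n → Fin n → Uo n) (p : ℕ)
    (a : Fin (2*p) → Fin n) (ha : ¬ Function.Injective a) : Hfun φ g p a = 0 := by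
  rw [Function.not_injective_iff] at ha
  obtain ⟨k1, k2, hval, hne⟩ := ha
  rw [Hfun, AlternatingMap.map_eq_zero_of_eq _ _ (i := k1) (j := k2) (by rw [hval]) hne,
    TensorProduct.zero_tmul]

theorem step2 {n : ℕ} (φ : Fin n → Fin (2*n)) (g : Fin n → Fin n → Uo n) (p : ℕ) :
    (∑ a : Fin (2*p) → Fin n, Hfun φ g p a)
      = ∑ a ∈ Finset.univ.filter (fun a : Fin (2*p) → Fin n => Function.Injective a),
          Hfun φ g p a :=
  (Finset.sum_filter_of_ne (fun a _ hne => by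
    by_contra hinj
    exact hne (Hfun_vanish φ g p a hinj))).symm
noncomputable def jFun {n p : ℕ} (hn : 0 < n) (Iσ : Finset (Fin n) × Equiv.Perm (Fin (2*p))) :
    Fin (2*p) → Fin n :=
  if h : Iσ.1.card = 2*p then fun k => Iσ.1.orderEmbOfFin h (Iσ.2 k) else fun _ => ⟨0, hn⟩

noncomputable def iFun {n p : ℕ} (a : Fin (2*p) → Fin n) :
    Finset (Fin n) × Equiv.Perm (Fin (2*p)) :=
  if h : Function.Injective a then (Finset.image a Finset.univ, permOf a h) else (∅, 1)

theorem imgCard {n p : ℕ} {a : Fin (2*p) → Fin n} (ha : Function.Injective a) :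
    (Finset.image a Finset.univ).card = 2*p := by
  rw [Finset.card_image_of_injective _ ha, Finset.card_univ, Fintype.card_fin]

theorem jFun_iFun {n p : ℕ} (hn : 0 < n) {a : Fin (2*p) → Fin n} (ha : Function.Injective a) :
    jFun hn (iFun a) = a := by
  rw [iFun, dif_pos ha, jFun, dif_pos (imgCard ha)]
  funext k
  exact permOf_spec a ha (imgCard ha) k

theorem iFun_jFun {n p : ℕ} (hn : 0 < n) {Iσ : Finset (Fin n) × Equiv.Perm (Fin (2*p))}
    (h : Iσ.1.card = 2*p) : iFun (jFun hn Iσ) = Iσ := by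
  obtain ⟨I, σ⟩ := Iσ
  simp only at h
  have hadef : jFun hn (I, σ) = fun k => I.orderEmbOfFin h (σ k) := by
    rw [jFun, dif_pos h]
  have hainj : Function.Injective (jFun hn (I, σ)) := by
    rw [hadef]
    exact (I.orderEmbOfFin h).injective.comp σ.injective
  have himg : Finset.image (jFun hn (I, σ)) Finset.univ = I := by
    apply Finset.ext
    intro x
    rw [Finset.mem_image]
    constructor
    · rintro ⟨k, _, rfl⟩
      rw [hadef]
      exact Finset.orderEmbOfFin_mem I h (σ k)
    · intro hx
      have hx' : x ∈ Set.range (I.orderEmbOfFin h) := by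
        rw [Finset.range_orderEmbOfFin]
        exact hx
      obtain ⟨k, hk⟩ := hx'
      refine ⟨σ⁻¹ k, Finset.mem_univ _, ?_⟩
      rw [hadef]
      simp [hk]
  have hc : (Finset.image (jFun hn (I, σ)) Finset.univ).card = 2*p := by rw [himg]; exact h
  rw [iFun, dif_pos hainj]
  refine Prod.ext himg (Equiv.ext fun k => ?_)
  apply (I.orderEmbOfFin h).injective
  have h1 := permOf_spec (jFun hn (I, σ)) hainj hc k
  have h2 := ordEmb_congr himg hc h (permOf (jFun hn (I, σ)) hainj k)
  rw [h2] at h1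
  rw [h1, hadef]

theorem step3 {n p : ℕ} (hn : 0 < n) (φ : Fin n → Fin (2*n)) (g : Fin n → Fin n → Uo n) :
    (∑ a ∈ Finset.univ.filter (fun a : Fin (2*p) → Fin n => Function.Injective a),
        Hfun φ g p a)
      = ∑ Iσ ∈ Finset.univ.filter
            (fun Iσ : Finset (Fin n) × Equiv.Perm (Fin (2*p)) => Iσ.1.card = 2*p),
          Hfun φ g p (jFun hn Iσ) := by
  refine Finset.sum_nbij' iFun (jFun hn) ?_ ?_ ?_ ?_ ?_
  · intro a hain
    have ha := (Finset.mem_filter.mp hain).2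
    rw [Finset.mem_filter]
    refine ⟨Finset.mem_univ _, ?_⟩
    rw [iFun, dif_pos ha]
    exact imgCard ha
  · intro Iσ hIσ
    have h := (Finset.mem_filter.mp hIσ).2
    rw [Finset.mem_filter]
    refine ⟨Finset.mem_univ _, ?_⟩
    rw [jFun, dif_pos h]
    exact (Iσ.1.orderEmbOfFin h).injective.comp Iσ.2.injective
  · intro a hain
    exact jFun_iFun hn (Finset.mem_filter.mp hain).2
  · intro Iσ hIσ
    exact iFun_jFun hn (Finset.mem_filter.mp hIσ).2
  · intro a hain
    rw [jFun_iFun hn (Finset.mem_filter.mp hain).2]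
theorem step4 {n p : ℕ} (hn : 0 < n) (φ : Fin n → Fin (2*n)) (g : Fin n → Fin n → Uo n) :
    (∑ Iσ ∈ Finset.univ.filter
        (fun Iσ : Finset (Fin n) × Equiv.Perm (Fin (2*p)) => Iσ.1.card = 2*p),
        Hfun φ g p (jFun hn Iσ))
    = ∑ I : Finset (Fin n),
        if h : I.card = 2*p then
          (ExteriorAlgebra.ιMulti ℂ (2*p)
            (fun k => Pi.single (φ (I.orderEmbOfFin h k)) (1:ℂ))) ⊗ₜ[ℂ]
          (∑ σ : Equiv.Perm (Fin (2*p)), (Equiv.Perm.sign σ : ℤ) •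
             (List.ofFn fun k : Fin p =>
                g (I.orderEmbOfFin h (σ ⟨2*k.1, by have := k.2; omega⟩))
                  (I.orderEmbOfFin h (σ ⟨2*k.1+1, by have := k.2; omega⟩))).prod)
        else 0 := by
  rw [Finset.sum_filter, Fintype.sum_prod_type]
  apply Finset.sum_congr rfl
  intro I _
  by_cases h : I.card = 2*p
  · rw [dif_pos h, TensorProduct.tmul_sum]
    apply Finset.sum_congr rfl
    intro σ _
    rw [if_pos h]
    have hj : jFun hn (I, σ) = fun k => I.orderEmbOfFin h (σ k) := by
      rw [jFun]; exact dif_pos h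
    rw [hj, Hfun]
    have hv : (fun k : Fin (2*p) => Pi.single (φ (I.orderEmbOfFin h (σ k))) (1:ℂ))
        = (fun k : Fin (2*p) => Pi.single (φ (I.orderEmbOfFin h k)) (1:ℂ)) ∘ σ := rfl
    rw [hv, AlternatingMap.map_perm, Units.smul_def, myZsmulTmulLeft, myZsmulTmulRight]
  · rw [dif_neg h]
    simp [h]

theorem myMain {n : ℕ} (hn : 0 < n) (φ : Fin n → Fin (2*n)) (g : Fin n → Fin n → Uo n)
    (p : ℕ) :
    (∑ i : Fin n, ∑ j : Fin n, eL n (φ i) * eL n (φ j) * embU n (g i j)) ^ p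
    = ∑ I : Finset (Fin n),
        if h : I.card = 2*p then
          (ExteriorAlgebra.ιMulti ℂ (2*p)
            (fun k => Pi.single (φ (I.orderEmbOfFin h k)) (1:ℂ))) ⊗ₜ[ℂ]
          (∑ σ : Equiv.Perm (Fin (2*p)), (Equiv.Perm.sign σ : ℤ) •
             (List.ofFn fun k : Fin p =>
                g (I.orderEmbOfFin h (σ ⟨2*k.1, by have := k.2; omega⟩))
                  (I.orderEmbOfFin h (σ ⟨2*k.1+1, by have := k.2; omega⟩))).prod)
        else 0 :=
  (step1 φ g p).trans ((step2 φ g p).trans ((step3 hn φ g).trans (step4 hn φ g)))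
theorem embOf_cast {n' : ℕ} (I : Finset (Fin n')) {p : ℕ} (h : I.card = 2*p) (k : Fin (2*p)) :
    I.orderEmbOfFin (rfl : I.card = I.card) (Fin.cast h.symm k) = I.orderEmbOfFin h k :=
  Finset.orderEmbOfFin_eq_orderEmbOfFin_iff.mpr rfl

theorem myNcPfSub {A : Type*} [Ring A] [Algebra ℂ A] {n' : ℕ} (M : Matrix (Fin n') (Fin n') A)
    {p : ℕ} (I : Finset (Fin n')) (h : I.card = 2*p) :
    ncPfSub M I = ((2:ℂ)^p * p.factorial)⁻¹ •
      ∑ σ : Equiv.Perm (Fin (2*p)), (Equiv.Perm.sign σ : ℤ) •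
        (List.ofFn fun k : Fin p =>
          M (I.orderEmbOfFin h (σ ⟨2*k.1, by have := k.2; omega⟩))
            (I.orderEmbOfFin h (σ ⟨2*k.1+1, by have := k.2; omega⟩))).prod := by
  rw [ncPfSub, myNcPf_cast h]
  congr 1
  refine (Fintype.sum_equiv (Equiv.permCongr (finCongr h.symm)) _ _ (fun σ => ?_)).symm
  rw [Equiv.Perm.sign_permCongr]
  congr 1
theorem tmulOne_mul_embU {n : ℕ} (x : ExteriorAlgebra ℂ (Fin (2*n) → ℂ)) (z : Uo n) :
    (x ⊗ₜ[ℂ] (1 : Uo n)) * embU n z = x ⊗ₜ[ℂ] z := by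
  rw [embU, Algebra.TensorProduct.tmul_mul_tmul, one_mul, mul_one]

theorem eLProd_eq {n p : ℕ} (I : Finset (Fin n)) (h : I.card = 2*p) :
    eLProd n I = (ExteriorAlgebra.ιMulti ℂ (2*p)
      (fun k => Pi.single (Fin.castLE (by omega : n ≤ 2*n) (I.orderEmbOfFin h k)) (1:ℂ)))
      ⊗ₜ[ℂ] (1 : Uo n) := by
  rw [eLProd, eL_prod_eq n I.card]
  congr 1
  rw [ExteriorAlgebra.ιMulti_apply, ExteriorAlgebra.ιMulti_apply]
  refine Eq.trans (congrArg List.prod (myOfFn_cast h.symm _)) ?_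
  refine congrArg List.prod (congrArg List.ofFn (funext fun k => ?_))
  rw [embOf_cast]

theorem eLProdNeg_eq {n q : ℕ} (J : Finset (Fin n)) (h : J.card = 2*q) :
    eLProdNeg n J = ((-1:ℤ)^((2*q).choose 2)) •
      ((ExteriorAlgebra.ιMulti ℂ (2*q)
        (fun k => Pi.single (Fin.rev (Fin.castLE (by omega : n ≤ 2*n) (J.orderEmbOfFin h k)))
          (1:ℂ))) ⊗ₜ[ℂ] (1 : Uo n)) := by
  rw [eLProdNeg, myRevProd J.card _ (fun i j => eL_anticomm n _ _)]
  have hch : J.card.choose 2 = (2*q).choose 2 := by rw [h]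
  rw [hch]
  congr 1
  rw [eL_prod_eq n J.card]
  congr 1
  rw [ExteriorAlgebra.ιMulti_apply, ExteriorAlgebra.ιMulti_apply]
  refine Eq.trans (congrArg List.prod (myOfFn_cast h.symm _)) ?_
  refine congrArg List.prod (congrArg List.ofFn (funext fun k => ?_))
  rw [embOf_cast]

theorem choose_two_mul (q : ℕ) : (2*q).choose 2 = q * (2*q-1) := by
  rw [Nat.choose_two_right, Nat.mul_assoc, Nat.mul_div_cancel_left _ (by norm_num : 0 < 2)]

theorem signFact (q : ℕ) : ((-1:ℂ))^((2*q).choose 2) = (-1:ℂ)^q := by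
  rw [choose_two_mul]
  rcases Nat.even_or_odd q with he | ho
  · rw [he.mul_right _ |>.neg_one_pow, he.neg_one_pow]
  · obtain ⟨s, rfl⟩ := ho
    have ho' : Odd (2*s+1) := ⟨s, rfl⟩
    have h1 : Odd (2*(2*s+1)-1) := ⟨2*s, by omega⟩
    rw [(ho'.mul h1).neg_one_pow, ho'.neg_one_pow]
theorem finalTheta {n : ℕ} (hn : 0 < n) (𝒳 : Fin (2 * n) → Fin (2 * n) → oLie n) (p : ℕ) :
    ThetaL n 𝒳 ^ p =
      (2 ^ p * p.factorial : ℕ) •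
        (∑ I : Finset (Fin n),
          if I.card = 2 * p then
            eLProd n I * embU n (ncPfSub (Matrix.of fun i j : Fin n =>
              uIota n (𝒳 (Fin.castLE (by omega) i) (Fin.rev (Fin.castLE (by omega) j)))) I)
          else 0) := by
  rw [ThetaL, myMain hn (fun i => Fin.castLE (by omega : n ≤ 2*n) i)
    (fun i j => uIota n (𝒳 (Fin.castLE (by omega : n ≤ 2*n) i)
      (Fin.rev (Fin.castLE (by omega : n ≤ 2*n) j)))) p]
  rw [Finset.smul_sum]
  refine Finset.sum_congr rfl fun I _ => ?_
  by_cases h : I.card = 2*p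
  · rw [dif_pos h, if_pos h, eLProd_eq I h, tmulOne_mul_embU, myNcPfSub _ I h,
      TensorProduct.tmul_smul, ← Nat.cast_smul_eq_nsmul ℂ, smul_smul]
    have hc : ((2^p * p.factorial : ℕ) : ℂ) * ((2:ℂ)^p * p.factorial)⁻¹ = 1 := by
      push_cast
      exact mul_inv_cancel₀ (mul_ne_zero (pow_ne_zero _ two_ne_zero)
        (Nat.cast_ne_zero.mpr p.factorial_ne_zero))
    rw [hc, one_smul]
    rfl
  · rw [dif_neg h, if_neg h, smul_zero]
theorem gAntisymU {n : ℕ} (𝒳 : Fin (2 * n) → Fin (2 * n) → oLie n)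
    (h𝒳 : ∀ i j, (𝒳 i j : Matrix (Fin (2 * n)) (Fin (2 * n)) ℂ) =
      Matrix.single i j 1 - Matrix.single (Fin.rev j) (Fin.rev i) 1)
    (a b : Fin (2 * n)) :
    uIota n (𝒳 (Fin.rev a) b) = -(uIota n (𝒳 (Fin.rev b) a)) := by
  have hx : 𝒳 (Fin.rev a) b = -(𝒳 (Fin.rev b) a) := by
    apply SetLike.coe_eq_coe.mp
    have hcoe : ((-(𝒳 (Fin.rev b) a) : oLie n) : Matrix (Fin (2*n)) (Fin (2*n)) ℂ)
        = -((𝒳 (Fin.rev b) a : oLie n) : Matrix (Fin (2*n)) (Fin (2*n)) ℂ) := rfl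
    rw [hcoe, h𝒳, h𝒳, Fin.rev_rev, Fin.rev_rev]
    abel
  rw [hx]
  exact map_neg (uIota n).toLinearMap _
theorem finalTheta' {n : ℕ} (hn : 0 < n) (𝒳 : Fin (2 * n) → Fin (2 * n) → oLie n)
    (h𝒳 : ∀ i j, (𝒳 i j : Matrix (Fin (2 * n)) (Fin (2 * n)) ℂ) =
      Matrix.single i j 1 - Matrix.single (Fin.rev j) (Fin.rev i) 1)
    (q : ℕ) :
    ThetaL' n 𝒳 ^ q =
      (2 ^ q * q.factorial : ℕ) •
        (∑ J : Finset (Fin n),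
          if J.card = 2 * q then
            eLProdNeg n J * embU n (ncPfSub (Matrix.of fun i j : Fin n =>
              uIota n (𝒳 (Fin.rev (Fin.castLE (by omega) j)) (Fin.castLE (by omega) i))) J)
          else 0) := by
  have hsum : ThetaL' n 𝒳 = ∑ i : Fin n, ∑ j : Fin n,
      eL n (Fin.rev (Fin.castLE (by omega : n ≤ 2*n) i)) *
      eL n (Fin.rev (Fin.castLE (by omega : n ≤ 2*n) j)) *
      embU n (uIota n (𝒳 (Fin.rev (Fin.castLE (by omega : n ≤ 2*n) i))
        (Fin.castLE (by omega : n ≤ 2*n) j))) := by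
    rw [ThetaL']
    exact Finset.sum_comm
  rw [hsum, myMain hn (fun i => Fin.rev (Fin.castLE (by omega : n ≤ 2*n) i))
    (fun i j => uIota n (𝒳 (Fin.rev (Fin.castLE (by omega : n ≤ 2*n) i))
      (Fin.castLE (by omega : n ≤ 2*n) j))) q]
  rw [Finset.smul_sum]
  refine Finset.sum_congr rfl fun J _ => ?_
  by_cases h : J.card = 2*q
  · rw [dif_pos h, if_pos h, eLProdNeg_eq J h, smul_mul_assoc, tmulOne_mul_embU,
      myNcPfSub _ J h, TensorProduct.tmul_smul]
    have hentry : ∀ (σ : Equiv.Perm (Fin (2*q))) (k : Fin q),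
        uIota n (𝒳 (Fin.rev (Fin.castLE (by omega : n ≤ 2*n)
            (J.orderEmbOfFin h (σ ⟨2*k.1, by have := k.2; omega⟩))))
          (Fin.castLE (by omega : n ≤ 2*n)
            (J.orderEmbOfFin h (σ ⟨2*k.1+1, by have := k.2; omega⟩))))
        = -((Matrix.of fun i j : Fin n => uIota n (𝒳 (Fin.rev (Fin.castLE (by omega) j))
              (Fin.castLE (by omega) i)))
            (J.orderEmbOfFin h (σ ⟨2*k.1, by have := k.2; omega⟩))
            (J.orderEmbOfFin h (σ ⟨2*k.1+1, by have := k.2; omega⟩))) := by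
      intro σ k
      rw [Matrix.of_apply]
      exact gAntisymU 𝒳 h𝒳 _ _
    have hneg : ∀ σ : Equiv.Perm (Fin (2*q)),
        ((Equiv.Perm.sign σ : ℤ) • (List.ofFn fun k : Fin q =>
          uIota n (𝒳 (Fin.rev (Fin.castLE (by omega : n ≤ 2*n)
              (J.orderEmbOfFin h (σ ⟨2*k.1, by have := k.2; omega⟩))))
            (Fin.castLE (by omega : n ≤ 2*n)
              (J.orderEmbOfFin h (σ ⟨2*k.1+1, by have := k.2; omega⟩))))).prod)
        = ((-1:ℤ)^q) • ((Equiv.Perm.sign σ : ℤ) • (List.ofFn fun k : Fin q =>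
            (Matrix.of fun i j : Fin n => uIota n (𝒳 (Fin.rev (Fin.castLE (by omega) j))
              (Fin.castLE (by omega) i)))
            (J.orderEmbOfFin h (σ ⟨2*k.1, by have := k.2; omega⟩))
            (J.orderEmbOfFin h (σ ⟨2*k.1+1, by have := k.2; omega⟩))).prod) := by
      intro σ
      rw [congrArg List.prod (congrArg List.ofFn (funext (hentry σ))), myNegProd, smul_comm]
    rw [Finset.sum_congr rfl (fun σ _ => hneg σ), ← Finset.smul_sum, myZsmulTmulRight]
    rw [← Int.cast_smul_eq_zsmul ℂ, ← Int.cast_smul_eq_zsmul ℂ, ← Nat.cast_smul_eq_nsmul ℂ,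
      smul_smul, smul_smul]
    congr 1
    push_cast
    rw [signFact]
    have hne : ((2:ℂ)^q * (q.factorial:ℂ)) ≠ 0 :=
      mul_ne_zero (pow_ne_zero _ two_ne_zero) (Nat.cast_ne_zero.mpr q.factorial_ne_zero)
    have hf : (q.factorial:ℂ) ≠ 0 := Nat.cast_ne_zero.mpr q.factorial_ne_zero
    field_simp
  · rw [dif_neg h, if_neg h, smul_zero]
/-- `Θ^p = 2^p p! Σ_{|I|=2p} e_I Pf(b_I)` and
`Θ'^q = 2^q q! Σ_{|J|=2q} e_{−J} Pf(c_J)` in `Λ`, where `b_{i,j} = ι(X_{i,−j})`,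
`c_{i,j} = ι(X_{−j,i})`. -/
theorem theta_pow_expansion_nc (n : ℕ) (hn : 1 ≤ n)
    (𝒳 : Fin (2 * n) → Fin (2 * n) → oLie n)
    (h𝒳 : ∀ i j, (𝒳 i j : Matrix (Fin (2 * n)) (Fin (2 * n)) ℂ) =
      Matrix.single i j 1 - Matrix.single (Fin.rev j) (Fin.rev i) 1)
    (p q : ℕ) :
    ThetaL n 𝒳 ^ p =
      (2 ^ p * p.factorial : ℕ) •
        (∑ I : Finset (Fin n),
          if I.card = 2 * p then
            eLProd n I * embU n (ncPfSub (Matrix.of fun i j : Fin n =>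
              uIota n (𝒳 (Fin.castLE (by omega) i) (Fin.rev (Fin.castLE (by omega) j)))) I)
          else 0) ∧
    ThetaL' n 𝒳 ^ q =
      (2 ^ q * q.factorial : ℕ) •
        (∑ J : Finset (Fin n),
          if J.card = 2 * q then
            eLProdNeg n J * embU n (ncPfSub (Matrix.of fun i j : Fin n =>
              uIota n (𝒳 (Fin.rev (Fin.castLE (by omega) j)) (Fin.castLE (by omega) i))) J)
          else 0) := by
  exact ⟨finalTheta (by omega) 𝒳 p, finalTheta' (by omega) 𝒳 h𝒳 q⟩

end
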